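/- arXiv:2508.19585 — 4 statements merged into one kernel-verified Lean document; each statement's English description precedes it below -/
import Mathlib

section
/- Let S be a finite set, μ a capacity on 2^S with Möbius inverse m, and suppose μ is modular on a collection 𝒞 of 'critical' events closed under union and intersection, meaning μ(E ∪ F) + μ(E ∩ F) = μ(E) + μ(F) for all E, F ∈ 𝒞. Suppose also every event E with m(E) > 0 belongs to 𝒞, and an event is critical whenever it is a union of events with strictly positive Möbius mass. Then m(E) ≥ 0 for every E ⊆ S. -/
/-- If a capacity is modular on a collection 𝒞 of critical events closed under unions and
intersections, 𝒞 contains every event of positive Möbius mass, and every (nonempty finite)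
union of events with positive Möbius mass is critical, then the Möbius inverse is nonnegative. -/
theorem stmt_2 {S : Type*} [Fintype S] [DecidableEq S] (μ : Finset S → ℝ)
    (hground : μ ∅ = 0) (hnorm : μ Finset.univ = 1)
    (hmono : ∀ A B : Finset S, A ⊆ B → μ A ≤ μ B)
    (m : Finset S → ℝ)
    (hm : ∀ E : Finset S, m E = ∑ A ∈ E.powerset, (-1 : ℝ) ^ (E \ A).card * μ A)
    (𝒞 : Set (Finset S))
    (hUnion : ∀ E ∈ 𝒞, ∀ F ∈ 𝒞, E ∪ F ∈ 𝒞)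
    (hInter : ∀ E ∈ 𝒞, ∀ F ∈ 𝒞, E ∩ F ∈ 𝒞)
    (hmod : ∀ E ∈ 𝒞, ∀ F ∈ 𝒞, μ (E ∪ F) + μ (E ∩ F) = μ E + μ F)
    (hpos : ∀ E : Finset S, 0 < m E → E ∈ 𝒞)
    (hcover : ∀ T : Finset (Finset S), T.Nonempty → (∀ A ∈ T, 0 < m A) → T.sup id ∈ 𝒞) :
    ∀ E : Finset S, 0 ≤ m E := by
  classical
  have hm0 : m ∅ = 0 := by simpa [hground] using hm ∅
  -- alternating sums over powersets
  have altsum : ∀ Y : Finset S, ∑ C ∈ Y.powerset, (-1 : ℝ) ^ C.card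
      = if Y = ∅ then 1 else 0 := by
    intro Y
    have h := Finset.sum_powerset_neg_one_pow_card (x := Y)
    have h2 : ((∑ C ∈ Y.powerset, (-1 : ℤ) ^ C.card : ℤ) : ℝ)
        = ∑ C ∈ Y.powerset, (-1 : ℝ) ^ C.card := by push_cast; rfl
    rw [← h2, h]
    split <;> norm_num
  -- Möbius inversion
  have hinv : ∀ X : Finset S, ∑ A ∈ X.powerset, m A = μ X := by
    intro X
    have swap : ∑ A ∈ X.powerset, m A
        = ∑ B ∈ X.powerset, ∑ A ∈ X.powerset.filter (fun A => B ⊆ A),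
            (-1 : ℝ) ^ ((A \ B).card) * μ B := by
      rw [Finset.sum_congr rfl (fun A _ => hm A)]
      refine Finset.sum_comm' ?_
      intro A B
      simp only [Finset.mem_powerset, Finset.mem_filter]
      constructor
      · rintro ⟨h1, h2⟩; exact ⟨⟨h1, h2⟩, h2.trans h1⟩
      · rintro ⟨⟨h1, h2⟩, _⟩; exact ⟨h1, h2⟩
    rw [swap]
    have inner : ∀ B ∈ X.powerset,
        ∑ A ∈ X.powerset.filter (fun A => B ⊆ A), (-1 : ℝ) ^ ((A \ B).card) * μ B
          = (if B = X then (1 : ℝ) else 0) * μ B := by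
      intro B hB
      rw [Finset.mem_powerset] at hB
      rw [← Finset.sum_mul]
      congr 1
      have hbij : ∑ A ∈ X.powerset.filter (fun A => B ⊆ A), (-1 : ℝ) ^ ((A \ B).card)
          = ∑ C ∈ (X \ B).powerset, (-1 : ℝ) ^ C.card := by
        refine Finset.sum_nbij' (fun A => A \ B) (fun C => B ∪ C) ?_ ?_ ?_ ?_ ?_
        · intro A hA
          rcases Finset.mem_filter.1 hA with ⟨hA1, _⟩
          rw [Finset.mem_powerset] at hA1 ⊢
          exact Finset.sdiff_subset_sdiff hA1 (Finset.Subset.refl _)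
        · intro C hC
          rw [Finset.mem_powerset] at hC
          refine Finset.mem_filter.2 ⟨Finset.mem_powerset.2 ?_, Finset.subset_union_left⟩
          exact Finset.union_subset hB (hC.trans Finset.sdiff_subset)
        · intro A hA
          rcases Finset.mem_filter.1 hA with ⟨_, hBA⟩
          exact Finset.union_sdiff_of_subset hBA
        · intro C hC
          rw [Finset.mem_powerset] at hC
          exact Finset.union_sdiff_cancel_left
            (Finset.disjoint_of_subset_right hC Finset.sdiff_disjoint.symm)
        · intro A hA; rfl
      rw [hbij, altsum]
      by_cases hXB : B = X
      · simp [hXB]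
      · have : X \ B ≠ ∅ := by
          rw [Ne, Finset.sdiff_eq_empty_iff_subset]
          exact fun h => hXB (Finset.Subset.antisymm hB h)
        simp [this, hXB]
    rw [Finset.sum_congr rfl inner]
    simp only [ite_mul, one_mul, zero_mul]
    rw [Finset.sum_ite_eq' X.powerset X μ]
    simp
  -- pairwise crossing identity
  have hcross : ∀ P ∈ 𝒞, ∀ Q ∈ 𝒞,
      ∑ C ∈ (P ∪ Q).powerset.filter (fun C => ¬ C ⊆ P ∧ ¬ C ⊆ Q), m C = 0 := by
    intro P hP Q hQ
    have hsplit := Finset.sum_filter_add_sum_filter_not (P ∪ Q).powerset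
      (fun C => C ⊆ P ∨ C ⊆ Q) m
    have e1 : (P ∪ Q).powerset.filter (fun C => C ⊆ P ∨ C ⊆ Q)
        = P.powerset ∪ Q.powerset := by
      ext C
      simp only [Finset.mem_filter, Finset.mem_powerset, Finset.mem_union]
      constructor
      · rintro ⟨_, h⟩; exact h
      · rintro (h | h)
        · exact ⟨h.trans Finset.subset_union_left, Or.inl h⟩
        · exact ⟨h.trans Finset.subset_union_right, Or.inr h⟩
    have e2 : (P ∪ Q).powerset.filter (fun C => ¬ (C ⊆ P ∨ C ⊆ Q))
        = (P ∪ Q).powerset.filter (fun C => ¬ C ⊆ P ∧ ¬ C ⊆ Q) := by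
      apply Finset.filter_congr
      intro C _
      simp [not_or]
    have e3 : P.powerset ∩ Q.powerset = (P ∩ Q).powerset := by
      ext C
      simp only [Finset.mem_inter, Finset.mem_powerset, Finset.subset_inter_iff]
    have e4 : ∑ x ∈ P.powerset ∪ Q.powerset, m x + ∑ x ∈ P.powerset ∩ Q.powerset, m x
        = ∑ x ∈ P.powerset, m x + ∑ x ∈ Q.powerset, m x := Finset.sum_union_inter
    rw [e3, hinv P, hinv Q, hinv (P ∩ Q)] at e4
    rw [e1, e2, hinv (P ∪ Q)] at hsplit
    have := hmod P hP Q hQ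
    linarith
  -- closure of 𝒞 under finite sups
  have hsup : ∀ 𝒢 : Finset (Finset S), 𝒢.Nonempty → (∀ G ∈ 𝒢, G ∈ 𝒞) → 𝒢.sup id ∈ 𝒞 := by
    intro 𝒢 hne hG
    rw [← Finset.sup'_eq_sup hne]
    exact Finset.sup'_mem 𝒞 (fun x hx y hy => hUnion x hx y hy) 𝒢 hne id hG
  -- generalized crossing identity
  have claim : ∀ 𝒢 : Finset (Finset S), (∀ G ∈ 𝒢, G ∈ 𝒞) → ∀ V, V ∈ 𝒞 → V ⊆ 𝒢.sup id →
      ∑ C ∈ V.powerset.filter (fun C => ∀ G ∈ 𝒢, ¬ C ⊆ G), m C = 0 := by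
    intro 𝒢
    induction 𝒢 using Finset.induction_on with
    | empty =>
      intro _ V _ hV
      have hVempty : V = ∅ := Finset.subset_empty.1 (by simpa using hV)
      subst hVempty
      simp [hm0]
    | @insert A 𝒢 hA ih =>
      intro hmem V hV hVsub
      have hAC : A ∈ 𝒞 := hmem A (Finset.mem_insert_self A 𝒢)
      have hGC : ∀ G ∈ 𝒢, G ∈ 𝒞 := fun G hG => hmem G (Finset.mem_insert_of_mem hG)
      rcases Finset.eq_empty_or_nonempty 𝒢 with rfl | hGne
      · have hVA : V ⊆ A := by simpa using hVsub
        apply Finset.sum_eq_zero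
        intro C hC
        rcases Finset.mem_filter.1 hC with ⟨hCp, hCq⟩
        exact ((hCq A (Finset.mem_insert_self _ _))
          ((Finset.mem_powerset.1 hCp).trans hVA)).elim
      · set U := 𝒢.sup id with hU
        have hUC : U ∈ 𝒞 := hsup 𝒢 hGne hGC
        have hVAU : V ⊆ A ∪ U := by simpa [Finset.sup_insert] using hVsub
        have hVeq : (V ∩ A) ∪ (V ∩ U) = V := by
          rw [← Finset.inter_union_distrib_left]
          exact Finset.inter_eq_left.2 hVAU
        have hsplit := Finset.sum_filter_add_sum_filter_not
          (V.powerset.filter (fun C => ∀ G ∈ insert A 𝒢, ¬ C ⊆ G)) (fun C => C ⊆ U) m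
        -- part with ¬ C ⊆ U : pairwise crossing for (V ∩ A) and (V ∩ U)
        have e2 : (V.powerset.filter (fun C => ∀ G ∈ insert A 𝒢, ¬ C ⊆ G)).filter
              (fun C => ¬ C ⊆ U)
            = ((V ∩ A) ∪ (V ∩ U)).powerset.filter
              (fun C => ¬ C ⊆ (V ∩ A) ∧ ¬ C ⊆ (V ∩ U)) := by
          ext C
          simp only [Finset.mem_filter, Finset.mem_powerset, Finset.mem_insert, hVeq]
          constructor
          · rintro ⟨⟨hCV, hall⟩, hCU⟩
            refine ⟨hCV, ?_, ?_⟩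
            · intro h; exact hall A (Or.inl rfl) (h.trans Finset.inter_subset_right)
            · intro h; exact hCU (h.trans Finset.inter_subset_right)
          · rintro ⟨hCV, hA', hU'⟩
            have hCU : ¬ C ⊆ U := fun h => hU' (Finset.subset_inter hCV h)
            refine ⟨⟨hCV, ?_⟩, hCU⟩
            rintro G (rfl | hG)
            · exact fun h => hA' (Finset.subset_inter hCV h)
            · exact fun h => hCU (h.trans (Finset.le_sup (f := id) hG))
        have part2 : ∑ C ∈ (V.powerset.filter
              (fun C => ∀ G ∈ insert A 𝒢, ¬ C ⊆ G)).filter (fun C => ¬ C ⊆ U), m C = 0 := by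
          rw [e2]
          exact hcross (V ∩ A) (hInter V hV A hAC) (V ∩ U) (hInter V hV U hUC)
        -- part with C ⊆ U : use induction hypothesis twice
        have key1 : ∑ C ∈ (V ∩ U).powerset.filter (fun C => ∀ G ∈ 𝒢, ¬ C ⊆ G), m C = 0 :=
          ih hGC (V ∩ U) (hInter V hV U hUC) Finset.inter_subset_right
        have key2 : ∑ C ∈ (V ∩ U ∩ A).powerset.filter (fun C => ∀ G ∈ 𝒢, ¬ C ⊆ G), m C = 0 :=
          ih hGC (V ∩ U ∩ A) (hInter _ (hInter V hV U hUC) A hAC)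
            (Finset.inter_subset_left.trans Finset.inter_subset_right)
        have hsplit2 := Finset.sum_filter_add_sum_filter_not
          ((V ∩ U).powerset.filter (fun C => ∀ G ∈ 𝒢, ¬ C ⊆ G)) (fun C => C ⊆ A) m
        have e3 : ((V ∩ U).powerset.filter (fun C => ∀ G ∈ 𝒢, ¬ C ⊆ G)).filter
              (fun C => C ⊆ A)
            = (V ∩ U ∩ A).powerset.filter (fun C => ∀ G ∈ 𝒢, ¬ C ⊆ G) := by
          ext C
          simp only [Finset.mem_filter, Finset.mem_powerset, Finset.subset_inter_iff]
          tauto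
        have e4 : ((V ∩ U).powerset.filter (fun C => ∀ G ∈ 𝒢, ¬ C ⊆ G)).filter
              (fun C => ¬ C ⊆ A)
            = (V.powerset.filter (fun C => ∀ G ∈ insert A 𝒢, ¬ C ⊆ G)).filter
              (fun C => C ⊆ U) := by
          ext C
          simp only [Finset.mem_filter, Finset.mem_powerset, Finset.mem_insert,
            Finset.subset_inter_iff]
          constructor
          · rintro ⟨⟨⟨hCV, hCU⟩, hall⟩, hCA⟩
            refine ⟨⟨hCV, ?_⟩, hCU⟩
            rintro G (rfl | hG)
            · exact hCA
            · exact hall G hG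
          · rintro ⟨⟨hCV, hall⟩, hCU⟩
            exact ⟨⟨⟨hCV, hCU⟩, fun G hG => hall G (Or.inr hG)⟩,
              hall A (Or.inl rfl)⟩
        rw [e3, key2] at hsplit2
        rw [e4] at hsplit2
        rw [key1] at hsplit2
        rw [← hsplit, part2]
        linarith
  -- main argument by strong induction
  intro E
  induction E using Finset.strongInduction with
  | _ E ih =>
    by_contra hneg
    push_neg at hneg
    set T := E.powerset.filter (fun A => A ≠ E ∧ 0 < m A) with hT
    have hTsub : ∀ A ∈ T, A ⊆ E ∧ A ≠ E ∧ 0 < m A := by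
      intro A hA
      rcases Finset.mem_filter.1 hA with ⟨h1, h2, h3⟩
      exact ⟨Finset.mem_powerset.1 h1, h2, h3⟩
    set B := T.sup id with hB
    have hBE : B ⊆ E := Finset.sup_le (fun A hA => (hTsub A hA).1)
    by_cases hcase : B = E
    · -- E is covered by its positive proper subsets
      have hEne : E ≠ ∅ := by
        intro h
        rw [h, hm0] at hneg
        exact lt_irrefl _ hneg
      have hTne : T.Nonempty := by
        rw [Finset.nonempty_iff_ne_empty]
        intro h
        apply hEne
        rw [← hcase, hB, h]
        simp
      have hTpos : ∀ A ∈ T, 0 < m A := fun A hA => (hTsub A hA).2.2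
      have hEC : E ∈ 𝒞 := by
        have := hcover T hTne hTpos
        rwa [← hB, hcase] at this
      have hTC : ∀ A ∈ T, A ∈ 𝒞 := fun A hA => hpos A (hTpos A hA)
      have h0 : ∑ C ∈ E.powerset.filter (fun C => ∀ G ∈ T, ¬ C ⊆ G), m C = 0 :=
        claim T hTC E hEC (by rw [← hB, hcase])
      have hEmem : E ∈ E.powerset.filter (fun C => ∀ G ∈ T, ¬ C ⊆ G) := by
        refine Finset.mem_filter.2 ⟨Finset.mem_powerset_self _, ?_⟩
        intro G hG hEG
        exact (hTsub G hG).2.1 (Finset.Subset.antisymm (hTsub G hG).1 hEG)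
      rw [← Finset.add_sum_erase _ _ hEmem] at h0
      have hrest : ∀ C ∈ (E.powerset.filter (fun C => ∀ G ∈ T, ¬ C ⊆ G)).erase E,
          m C = 0 := by
        intro C hC
        rcases Finset.mem_erase.1 hC with ⟨hCE, hC'⟩
        rcases Finset.mem_filter.1 hC' with ⟨hCp, hCq⟩
        have hCsub : C ⊂ E := Finset.ssubset_iff_subset_ne.2 ⟨Finset.mem_powerset.1 hCp, hCE⟩
        have h1 : 0 ≤ m C := ih C hCsub
        rcases lt_or_eq_of_le h1 with h2 | h2
        · exfalso
          have hCT : C ∈ T := Finset.mem_filter.2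
            ⟨hCp, hCE, h2⟩
          exact hCq C hCT (Finset.Subset.refl C)
        · exact h2.symm
      rw [Finset.sum_eq_zero hrest] at h0
      simp at h0
      linarith
    · -- the union of positive proper subsets is a proper subset: contradict monotonicity
      have hBss : B ⊂ E := Finset.ssubset_iff_subset_ne.2 ⟨hBE, hcase⟩
      have h1 : μ E = m E + ∑ A ∈ E.powerset.erase E, m A := by
        rw [← hinv E, ← Finset.add_sum_erase _ _ (Finset.mem_powerset_self E)]
      have hTsubset : T ⊆ E.powerset.erase E := by
        intro A hA
        exact Finset.mem_erase.2 ⟨(hTsub A hA).2.1, Finset.mem_powerset.2 (hTsub A hA).1⟩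
      have h2 : ∑ A ∈ E.powerset.erase E, m A ≤ ∑ A ∈ T, m A := by
        have h5 := Finset.sum_le_sum_of_subset_of_nonneg (f := fun A => -m A) hTsubset ?_
        · rw [Finset.sum_neg_distrib, Finset.sum_neg_distrib, neg_le_neg_iff] at h5
          exact h5
        · intro i hi hiT
          rcases Finset.mem_erase.1 hi with ⟨hiE, hip⟩
          simp only [neg_nonneg]
          by_contra hcon
          push_neg at hcon
          exact hiT (Finset.mem_filter.2 ⟨hip, hiE, hcon⟩)
      have hTB : T ⊆ B.powerset := by
        intro A hA
        exact Finset.mem_powerset.2 (Finset.le_sup (f := id) hA)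
      have h3 : ∑ A ∈ T, m A ≤ ∑ A ∈ B.powerset, m A := by
        refine Finset.sum_le_sum_of_subset_of_nonneg hTB ?_
        intro i hi _
        exact ih i (lt_of_le_of_lt (Finset.mem_powerset.1 hi) hBss)
      have h4 : μ B ≤ μ E := hmono B E hBE
      rw [hinv B] at h3
      linarith
end

section
/- Let S be a finite set and μ a capacity on 2^S whose Möbius inverse m is nonnegative (a belief function). Then the Choquet integral of any a : S → ℝ with respect to μ equals Σ_{E ⊆ S, E ≠ ∅} m(E) · min_{t ∈ E} a(t). -/
open scoped Classical

/-- Minimum of `v` over a finite set (0 if empty). -/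
noncomputable def minOnFin {α : Type*} (E : Finset α) (v : α → ℝ) : ℝ :=
  if h : E.Nonempty then E.inf' h v else 0

/-- Auxiliary sum for the finite Choquet integral: given the (ascending) list of values of
`a` and the previous value, sum `(v - prev) * μ({a ≥ v})`. -/
noncomputable def choquetAux {S : Type*} [Fintype S] (μ : Finset S → ℝ) (a : S → ℝ) :
    ℝ → List ℝ → ℝ
  | _, [] => 0
  | prev, v :: rest =>
      (v - prev) * μ (Finset.univ.filter (fun s => v ≤ a s)) + choquetAux μ a v rest

/-- The Choquet integral of `a` with respect to `μ` on a finite state space, via the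
(ascending) sorted distinct values of `a`, starting from 0. -/
noncomputable def choquet {S : Type*} [Fintype S] (μ : Finset S → ℝ) (a : S → ℝ) : ℝ :=
  choquetAux μ a 0 ((Finset.univ.image a).sort (· ≤ ·))

section Aux

variable {S : Type*} [Fintype S] [DecidableEq S]

/-- Unanimity game. -/
noncomputable def uGame (E : Finset S) : Finset S → ℝ := fun B => if E ⊆ B then 1 else 0

lemma choquetAux_sum {ι : Type*} (T : Finset ι) (f : ι → Finset S → ℝ) (a : S → ℝ) :
    ∀ (l : List ℝ) (prev : ℝ),
      choquetAux (fun B => ∑ E ∈ T, f E B) a prev l = ∑ E ∈ T, choquetAux (f E) a prev l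
  | [], prev => by simp [choquetAux]
  | v :: rest, prev => by
      simp only [choquetAux, choquetAux_sum T f a rest v, Finset.mul_sum,
        Finset.sum_add_distrib]

lemma choquetAux_smul (c : ℝ) (ν : Finset S → ℝ) (a : S → ℝ) :
    ∀ (l : List ℝ) (prev : ℝ),
      choquetAux (fun B => c * ν B) a prev l = c * choquetAux ν a prev l
  | [], prev => by simp [choquetAux]
  | v :: rest, prev => by
      simp only [choquetAux, choquetAux_smul c ν a rest v]; ring

lemma uGame_filter (E : Finset S) (hE : E.Nonempty) (a : S → ℝ) (v : ℝ) :
    uGame E (Finset.univ.filter (fun s => v ≤ a s)) = if v ≤ E.inf' hE a then 1 else 0 := by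
  unfold uGame
  congr 1
  simp only [eq_iff_iff, Finset.le_inf'_iff]
  constructor
  · intro h t ht
    simpa using h ht
  · intro h t ht
    simp only [Finset.mem_filter, Finset.mem_univ, true_and]
    exact h t ht

lemma choquetAux_uGame_zero (E : Finset S) (hE : E.Nonempty) (a : S → ℝ) :
    ∀ (l : List ℝ) (prev : ℝ), (∀ x ∈ l, E.inf' hE a < x) →
      choquetAux (uGame E) a prev l = 0
  | [], prev, _ => by simp [choquetAux]
  | v :: rest, prev, h => by
      have hv : ¬ v ≤ E.inf' hE a := not_le.mpr (h v List.mem_cons_self)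
      rw [choquetAux, uGame_filter E hE, if_neg hv,
        choquetAux_uGame_zero E hE a rest v (fun x hx => h x (List.mem_cons_of_mem _ hx))]
      ring

lemma choquetAux_uGame (E : Finset S) (hE : E.Nonempty) (a : S → ℝ) :
    ∀ (l : List ℝ) (prev : ℝ), l.Pairwise (· ≤ ·) → l.Nodup → E.inf' hE a ∈ l →
      choquetAux (uGame E) a prev l = E.inf' hE a - prev
  | [], _, _, _, hmem => absurd hmem List.not_mem_nil
  | v :: rest, prev, hs, hnd, hmem => by
      have hvle : v ≤ E.inf' hE a := by
        rcases List.mem_cons.mp hmem with h | h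
        · exact h.ge
        · exact List.rel_of_pairwise_cons hs h
      rw [choquetAux, uGame_filter E hE, if_pos hvle, mul_one]
      by_cases hr : E.inf' hE a ∈ rest
      · rw [choquetAux_uGame E hE a rest v hs.of_cons hnd.of_cons hr]; ring
      · have hv : v = E.inf' hE a := by
          rcases List.mem_cons.mp hmem with h | h
          · exact h.symm
          · exact absurd h hr
        rw [choquetAux_uGame_zero E hE a rest v ?_]
        · rw [hv]; ring
        · intro x hx
          have h1 : v ≤ x := List.rel_of_pairwise_cons hs hx
          have h2 : x ≠ v := fun h => (List.nodup_cons.mp hnd).1 (h ▸ hx)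
          rw [← hv]; exact lt_of_le_of_ne h1 (Ne.symm h2)

lemma choquet_uGame (E : Finset S) (hE : E.Nonempty) (a : S → ℝ) :
    choquet (uGame E) a = E.inf' hE a := by
  obtain ⟨t, ht, hteq⟩ := Finset.exists_mem_eq_inf' hE a
  have hmem : E.inf' hE a ∈ (Finset.univ.image a).sort (· ≤ ·) := by
    rw [Finset.mem_sort]
    exact hteq ▸ Finset.mem_image_of_mem a (Finset.mem_univ t)
  rw [choquet, choquetAux_uGame E hE a _ 0 (Finset.pairwise_sort _ _)
    (Finset.sort_nodup _ _) hmem, sub_zero]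

lemma neg_one_pow_sum {α : Type*} [DecidableEq α] (x : Finset α) :
    ∑ C ∈ x.powerset, (-1 : ℝ) ^ C.card = if x = ∅ then 1 else 0 := by
  have h := Finset.sum_powerset_neg_one_pow_card (x := x)
  have h2 : ((∑ C ∈ x.powerset, (-1 : ℤ) ^ C.card : ℤ) : ℝ)
      = ∑ C ∈ x.powerset, (-1 : ℝ) ^ C.card := by push_cast; rfl
  rw [← h2, h]
  split <;> norm_num

lemma alt_sum_between {α : Type*} [DecidableEq α] (A B : Finset α) (hBA : B ⊆ A) :
    ∑ E ∈ A.powerset.filter (fun E => B ⊆ E), (-1 : ℝ) ^ (E \ B).card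
      = if A = B then 1 else 0 := by
  have key : ∑ E ∈ A.powerset.filter (fun E => B ⊆ E), (-1 : ℝ) ^ (E \ B).card
      = ∑ C ∈ (A \ B).powerset, (-1 : ℝ) ^ C.card := by
    refine Finset.sum_bij' (fun E _ => E \ B) (fun C _ => C ∪ B) ?_ ?_ ?_ ?_ ?_
    · intro E hE
      simp only [Finset.mem_filter, Finset.mem_powerset] at hE ⊢
      exact Finset.sdiff_subset_sdiff hE.1 (le_refl B)
    · intro C hC
      simp only [Finset.mem_powerset] at hC
      simp only [Finset.mem_filter, Finset.mem_powerset]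
      constructor
      · exact Finset.union_subset (hC.trans (Finset.sdiff_subset)) hBA
      · exact Finset.subset_union_right
    · intro E hE
      simp only [Finset.mem_filter, Finset.mem_powerset] at hE
      exact Finset.sdiff_union_of_subset hE.2
    · intro C hC
      simp only [Finset.mem_powerset] at hC
      have hd : Disjoint C B := Finset.disjoint_of_subset_left hC Finset.sdiff_disjoint
      show (C ∪ B) \ B = C
      rw [Finset.union_sdiff_distrib, Finset.sdiff_self, Finset.union_empty, hd.sdiff_eq_left]
    · intro E _; rfl
  rw [key, neg_one_pow_sum]
  congr 1
  simp only [eq_iff_iff, Finset.sdiff_eq_empty_iff_subset]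
  exact ⟨fun h => Finset.Subset.antisymm h hBA, fun h => h.le⟩

lemma mobius_inv (μ m : Finset S → ℝ)
    (hm : ∀ E : Finset S, m E = ∑ A ∈ E.powerset, (-1 : ℝ) ^ (E \ A).card * μ A)
    (A : Finset S) :
    ∑ E ∈ A.powerset, m E = μ A := by
  have step1 : ∀ E ∈ A.powerset,
      m E = ∑ B ∈ A.powerset, if B ⊆ E then (-1 : ℝ) ^ (E \ B).card * μ B else 0 := by
    intro E hE
    rw [Finset.mem_powerset] at hE
    rw [hm E, ← Finset.sum_filter]
    apply Finset.sum_congr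
    · ext B
      simp only [Finset.mem_powerset, Finset.mem_filter]
      exact ⟨fun h => ⟨h.trans hE, h⟩, fun h => h.2⟩
    · intros; rfl
  rw [Finset.sum_congr rfl step1, Finset.sum_comm]
  have step2 : ∀ B ∈ A.powerset,
      (∑ E ∈ A.powerset, if B ⊆ E then (-1 : ℝ) ^ (E \ B).card * μ B else 0)
        = (if A = B then 1 else 0) * μ B := by
    intro B hB
    rw [Finset.mem_powerset] at hB
    rw [← Finset.sum_filter, ← Finset.sum_mul, alt_sum_between A B hB]
  rw [Finset.sum_congr rfl step2]
  simp [ite_mul, Finset.sum_ite_eq, Finset.mem_powerset]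

end Aux

/-- For a belief function (capacity with nonnegative Möbius inverse), the Choquet integral
equals the Möbius-weighted sum of minima over nonempty events. -/
theorem stmt_14 {S : Type*} [Fintype S] [DecidableEq S] (μ : Finset S → ℝ)
    (hground : μ ∅ = 0) (hnorm : μ Finset.univ = 1)
    (hmono : ∀ A B : Finset S, A ⊆ B → μ A ≤ μ B)
    (m : Finset S → ℝ)
    (hm : ∀ E : Finset S, m E = ∑ A ∈ E.powerset, (-1 : ℝ) ^ (E \ A).card * μ A)
    (hm0 : ∀ E : Finset S, 0 ≤ m E)
    (a : S → ℝ) :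
    choquet μ a
      = ∑ E ∈ (Finset.univ : Finset S).powerset.filter (fun E => E.Nonempty),
          m E * minOnFin E a := by
  classical
  set T := (Finset.univ : Finset S).powerset.filter (fun E => E.Nonempty) with hT
  have hmempty : m ∅ = 0 := by
    rw [hm ∅]
    simp [hground]
  have hmu : ∀ B : Finset S, μ B = ∑ E ∈ T, m E * uGame E B := by
    intro B
    have h1 : ∑ E ∈ T, m E * uGame E B
        = ∑ E ∈ T, if E ⊆ B then m E else 0 := by
      refine Finset.sum_congr rfl fun E _ => ?_
      unfold uGame
      split <;> simp
    rw [h1, ← Finset.sum_filter]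
    have h2 : T.filter (fun E => E ⊆ B) = B.powerset.filter (fun E => E.Nonempty) := by
      ext E
      simp only [hT, Finset.mem_filter, Finset.mem_powerset]
      constructor
      · rintro ⟨⟨-, h⟩, h2⟩; exact ⟨h2, h⟩
      · rintro ⟨h1, h2⟩; exact ⟨⟨Finset.subset_univ E, h2⟩, h1⟩
    rw [h2]
    have h3 := Finset.sum_filter_add_sum_filter_not B.powerset (fun E => E.Nonempty) m
    have h4 : B.powerset.filter (fun E => ¬ E.Nonempty) = {∅} := by
      ext E
      simp [Finset.not_nonempty_iff_eq_empty]
      intro h; rw [h]; exact Finset.empty_subset B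
    rw [h4, Finset.sum_singleton, hmempty, add_zero, mobius_inv μ m hm B] at h3
    exact h3.symm
  have hfun : μ = fun B => ∑ E ∈ T, m E * uGame E B := funext hmu
  calc choquet μ a = choquetAux (fun B => ∑ E ∈ T, m E * uGame E B) a 0
        ((Finset.univ.image a).sort (· ≤ ·)) := by rw [choquet, hfun]
    _ = ∑ E ∈ T, choquetAux (fun B => m E * uGame E B) a 0
        ((Finset.univ.image a).sort (· ≤ ·)) := by
          rw [choquetAux_sum T (fun E B => m E * uGame E B) a]
    _ = ∑ E ∈ T, m E * minOnFin E a := by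
          refine Finset.sum_congr rfl fun E hE => ?_
          have hne : E.Nonempty := (Finset.mem_filter.mp hE).2
          rw [choquetAux_smul (m E) (uGame E) a]
          have : choquetAux (uGame E) a 0 ((Finset.univ.image a).sort (· ≤ ·))
              = choquet (uGame E) a := rfl
          rw [this, choquet_uGame E hne a, minOnFin, dif_pos hne]
end

section
/- Let S be a finite set, μ a capacity on 2^S with Möbius inverse m such that m ≥ 0. Then μ is supermodular: for all E, F ⊆ S, μ(E ∪ F) + μ(E ∩ F) ≥ μ(E) + μ(F). -/
open Finset

lemma aux_pow_sum {S : Type*} [DecidableEq S] (x : Finset S) :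
    (∑ C ∈ x.powerset, (-1 : ℝ) ^ C.card) = if x = ∅ then 1 else 0 := by
  have := Finset.sum_powerset_neg_one_pow_card (x := x)
  have h : ((∑ C ∈ x.powerset, (-1 : ℤ) ^ C.card : ℤ) : ℝ)
      = ∑ C ∈ x.powerset, (-1 : ℝ) ^ C.card := by push_cast; rfl
  rw [← h, this]
  split_ifs <;> simp

lemma aux_inner {S : Type*} [DecidableEq S] (B E : Finset S) (hBE : B ⊆ E) :
    (∑ A ∈ E.powerset.filter (fun A => B ⊆ A), (-1 : ℝ) ^ (A \ B).card)
      = if B = E then 1 else 0 := by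
  have key : (∑ A ∈ E.powerset.filter (fun A => B ⊆ A), (-1 : ℝ) ^ (A \ B).card)
      = ∑ C ∈ (E \ B).powerset, (-1 : ℝ) ^ C.card := by
    refine Finset.sum_nbij' (fun A => A \ B) (fun C => B ∪ C) ?_ ?_ ?_ ?_ ?_
    · intro A hA
      simp only [mem_filter, mem_powerset] at hA ⊢
      exact sdiff_subset_sdiff hA.1 le_rfl
    · intro C hC
      simp only [mem_powerset] at hC
      simp only [mem_filter, mem_powerset]
      constructor
      · exact union_subset hBE (hC.trans (sdiff_subset))
      · exact subset_union_left
    · intro A hA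
      simp only [mem_filter, mem_powerset] at hA
      rw [union_sdiff_self_eq_union, union_eq_right.mpr hA.2]
    · intro C hC
      simp only [mem_powerset] at hC
      rw [union_sdiff_cancel_left (disjoint_sdiff.mono_right hC)]
    · intro A hA; rfl
  rw [key, aux_pow_sum]
  have heq : E \ B = ∅ ↔ B = E := by
    rw [sdiff_eq_empty_iff_subset]
    exact ⟨fun h => Finset.Subset.antisymm hBE h, fun h => h ▸ Finset.Subset.refl _⟩
  simp [heq]

lemma aux_inv {S : Type*} [DecidableEq S] (μ : Finset S → ℝ) (m : Finset S → ℝ)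
    (hm : ∀ E : Finset S, m E = ∑ A ∈ E.powerset, (-1 : ℝ) ^ (E \ A).card * μ A)
    (E : Finset S) : μ E = ∑ A ∈ E.powerset, m A := by
  have : (∑ A ∈ E.powerset, m A)
      = ∑ A ∈ E.powerset, ∑ B ∈ A.powerset, (-1 : ℝ) ^ (A \ B).card * μ B := by
    exact Finset.sum_congr rfl fun A _ => hm A
  rw [this]
  rw [Finset.sum_comm' (s' := fun B => E.powerset.filter (fun A => B ⊆ A))
    (t' := E.powerset)
    (h := by
      intro A B
      simp only [mem_powerset, mem_filter]
      constructor
      · rintro ⟨h1, h2⟩; exact ⟨⟨h1, h2⟩, h2.trans h1⟩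
      · rintro ⟨⟨h1, h2⟩, h3⟩; exact ⟨h1, h2⟩)]
  have : ∀ B ∈ E.powerset,
      (∑ A ∈ E.powerset.filter (fun A => B ⊆ A), (-1 : ℝ) ^ (A \ B).card * μ B)
        = (if B = E then 1 else 0) * μ B := by
    intro B hB
    rw [← Finset.sum_mul, aux_inner B E (mem_powerset.mp hB)]
  rw [Finset.sum_congr rfl this]
  simp [Finset.sum_ite_eq' E.powerset E (fun B => 1 * μ B)]

/-- A grounded set function with nonnegative Möbius inverse is supermodular. -/
theorem stmt_16 {S : Type*} [DecidableEq S] (μ : Finset S → ℝ) (hground : μ ∅ = 0)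
    (m : Finset S → ℝ)
    (hm : ∀ E : Finset S, m E = ∑ A ∈ E.powerset, (-1 : ℝ) ^ (E \ A).card * μ A)
    (hm0 : ∀ E : Finset S, 0 ≤ m E) :
    ∀ E F : Finset S, μ E + μ F ≤ μ (E ∪ F) + μ (E ∩ F) := by
  intro E F
  have inv := aux_inv μ m hm
  have expand : ∀ G : Finset S, G ⊆ E ∪ F →
      μ G = ∑ A ∈ (E ∪ F).powerset, (if A ⊆ G then m A else 0) := by
    intro G hG
    rw [inv G]
    have h1 : ∑ A ∈ G.powerset, m A = ∑ A ∈ G.powerset, (if A ⊆ G then m A else 0) :=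
      Finset.sum_congr rfl fun A hA => (if_pos (mem_powerset.mp hA)).symm
    rw [h1]
    exact Finset.sum_subset (Finset.powerset_mono.mpr hG)
      (fun A _ hA => if_neg (fun h => hA (mem_powerset.mpr h)))
  rw [expand E subset_union_left, expand F subset_union_right,
    expand (E ∩ F) (inter_subset_left.trans subset_union_left),
    expand (E ∪ F) (Finset.Subset.refl _),
    ← Finset.sum_add_distrib, ← Finset.sum_add_distrib]
  apply Finset.sum_le_sum
  intro A hA
  have h0 := hm0 A
  have hsub : A ⊆ E ∩ F ↔ A ⊆ E ∧ A ⊆ F := Finset.subset_inter_iff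
  have hAEF : A ⊆ E ∪ F := mem_powerset.mp hA
  split_ifs with h1 h2 h3 h3 h3 h3 <;>
    first
      | linarith
      | (exact absurd (hsub.mpr ⟨h1, h2⟩) h3)
      | (rcases hsub.mp h3 with ⟨ha, hb⟩; tauto)
end

section
/- Let S be a finite set and 𝒱 a collection of nonempty subsets of S closed under intersections such that for every s ∈ ∪𝒱 the minimal element φ(s) of 𝒱 containing s exists. Then the closure of 𝒱 under unions, cl_∪(𝒱), is uniquely determined by the function V(·,·) defined by V(a,s) = max_{E ∈ 𝒱, s ∈ E} min_{t ∈ E} a(t): that is, if 𝒱 and 𝒱' are two such collections with V_𝒱(a,s) = V_𝒱'(a,s) for all a : S → ℝ and all s, then the minimal elements coincide: φ_𝒱(s) = φ_𝒱'(s) for all s ∈ ∪𝒱 = ∪𝒱'. -/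
/-- Minimum of `v` over a finite set (0 if empty). -/
noncomputable def finsetMinOn {α : Type*} (E : Finset α) (v : α → ℝ) : ℝ :=
  if h : E.Nonempty then E.inf' h v else 0

/-- Maximum of `v` over a finite set (0 if empty). -/
noncomputable def finsetMaxOn {α : Type*} (E : Finset α) (v : α → ℝ) : ℝ :=
  if h : E.Nonempty then E.sup' h v else 0

lemma minOn_le_of_mem {α : Type*} {E : Finset α} {v : α → ℝ} {t : α} (ht : t ∈ E) :
    finsetMinOn E v ≤ v t := by
  rw [finsetMinOn, dif_pos ⟨t, ht⟩]; exact Finset.inf'_le _ ht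

lemma minOn_const_one {α : Type*} {E : Finset α} (hE : E.Nonempty) :
    finsetMinOn E (fun _ => (1:ℝ)) = 1 := by
  rw [finsetMinOn, dif_pos hE]; exact Finset.inf'_const _ _

lemma minOn_eq_one_iff {α : Type*} [DecidableEq α] {E : Finset α} (hE : E.Nonempty)
    {T : Finset α} :
    finsetMinOn E (fun t => if t ∈ T then (1:ℝ) else 0) = 1 ↔ E ⊆ T := by
  constructor
  · intro h t ht
    have h1 := minOn_le_of_mem (v := fun t => if t ∈ T then (1:ℝ) else 0) ht
    rw [h] at h1
    by_contra htT
    simp [htT] at h1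
    linarith
  · intro hsub
    rw [finsetMinOn, dif_pos hE]
    apply le_antisymm
    · obtain ⟨t, ht⟩ := id hE
      refine le_trans (Finset.inf'_le _ ht) ?_
      simp [hsub ht]
    · apply Finset.le_inf'
      intro t ht
      simp [hsub ht]

lemma maxOn_eq_one {α : Type*} {F : Finset α} {v : α → ℝ}
    (hle : ∀ x ∈ F, v x ≤ 1) {x : α} (hx : x ∈ F) (hvx : v x = 1) : finsetMaxOn F v = 1 := by
  rw [finsetMaxOn, dif_pos ⟨x, hx⟩]
  apply le_antisymm
  · exact Finset.sup'_le _ _ hle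
  · rw [← hvx]; exact Finset.le_sup' _ hx

lemma maxOn_attained {α : Type*} {F : Finset α} {v : α → ℝ} (hF : F.Nonempty) :
    ∃ x ∈ F, finsetMaxOn F v = v x := by
  obtain ⟨x, hx, hvx⟩ := Finset.exists_mem_eq_sup' hF v
  exact ⟨x, hx, by rw [finsetMaxOn, dif_pos hF, hvx]⟩

/-- The verification value function `V(a,s)` uniquely determines the minimal verifiable
events: if two intersection-closed collections induce the same `V`, they cover the same
states and have the same minimal elements. -/
theorem stmt_19 {S : Type*} [Fintype S] [DecidableEq S]
    (𝒱 𝒱' : Finset (Finset S))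
    (hne : ∀ E ∈ 𝒱, E.Nonempty) (hne' : ∀ E ∈ 𝒱', E.Nonempty)
    (hInter : ∀ E ∈ 𝒱, ∀ F ∈ 𝒱, E ∩ F ∈ 𝒱)
    (hInter' : ∀ E ∈ 𝒱', ∀ F ∈ 𝒱', E ∩ F ∈ 𝒱')
    (φ φ' : S → Finset S)
    (hφ : ∀ s ∈ 𝒱.biUnion id, φ s ∈ 𝒱 ∧ s ∈ φ s ∧ ∀ F ∈ 𝒱, s ∈ F → φ s ⊆ F)
    (hφ' : ∀ s ∈ 𝒱'.biUnion id, φ' s ∈ 𝒱' ∧ s ∈ φ' s ∧ ∀ F ∈ 𝒱', s ∈ F → φ' s ⊆ F)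
    (hV : ∀ (a : S → ℝ) (s : S),
      finsetMaxOn (𝒱.filter (fun E => s ∈ E)) (fun E => finsetMinOn E a)
        = finsetMaxOn (𝒱'.filter (fun E => s ∈ E)) (fun E => finsetMinOn E a)) :
    𝒱.biUnion id = 𝒱'.biUnion id ∧ ∀ s ∈ 𝒱.biUnion id, φ s = φ' s := by
  -- membership in biUnion ↔ nonemptiness of filter
  have hmem : ∀ (𝒲 : Finset (Finset S)) (s : S),
      s ∈ 𝒲.biUnion id ↔ (𝒲.filter (fun E => s ∈ E)).Nonempty := by
    intro 𝒲 s
    simp [Finset.mem_biUnion, Finset.filter_nonempty_iff]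
  -- if covered, V of constant 1 is 1
  have hone : ∀ (𝒲 : Finset (Finset S)) (hw : ∀ E ∈ 𝒲, E.Nonempty) (s : S),
      s ∈ 𝒲.biUnion id →
      finsetMaxOn (𝒲.filter (fun E => s ∈ E)) (fun E => finsetMinOn E (fun _ => (1:ℝ))) = 1 := by
    intro 𝒲 hw s hs
    obtain ⟨E, hE⟩ := (hmem 𝒲 s).mp hs
    have hEn := hw E (Finset.mem_filter.mp hE).1
    refine maxOn_eq_one (fun F hF => ?_) hE (minOn_const_one hEn)
    exact le_of_eq (minOn_const_one (hw F (Finset.mem_filter.mp hF).1))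
  -- coverage equality
  have hcov : ∀ s : S, s ∈ 𝒱.biUnion id ↔ s ∈ 𝒱'.biUnion id := by
    intro s
    constructor
    · intro hs
      have h1 := hone 𝒱 hne s hs
      rw [hV (fun _ => 1) s] at h1
      by_contra hs'
      rw [hmem] at hs'
      rw [finsetMaxOn, dif_neg hs'] at h1
      norm_num at h1
    · intro hs
      have h1 := hone 𝒱' hne' s hs
      rw [← hV (fun _ => 1) s] at h1
      by_contra hs'
      rw [hmem] at hs'
      rw [finsetMaxOn, dif_neg hs'] at h1
      norm_num at h1
  -- key: from equal V with indicator of φ' s, get some E ∈ 𝒱 with s ∈ E, E ⊆ φ' s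
  have key : ∀ (𝒜 ℬ : Finset (Finset S)), (∀ E ∈ 𝒜, E.Nonempty) → (∀ E ∈ ℬ, E.Nonempty) →
      (∀ (a : S → ℝ) (s : S),
        finsetMaxOn (𝒜.filter (fun E => s ∈ E)) (fun E => finsetMinOn E a)
          = finsetMaxOn (ℬ.filter (fun E => s ∈ E)) (fun E => finsetMinOn E a)) →
      ∀ s : S, s ∈ 𝒜.biUnion id → s ∈ ℬ.biUnion id →
      ∀ T ∈ ℬ, s ∈ T → ∃ E ∈ 𝒜, s ∈ E ∧ E ⊆ T := by
    intro 𝒜 ℬ hA hB hVab s hsA hsB T hT hsT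
    set a : S → ℝ := fun t => if t ∈ T then (1:ℝ) else 0 with ha
    -- RHS is 1
    have hR : finsetMaxOn (ℬ.filter (fun E => s ∈ E)) (fun E => finsetMinOn E a) = 1 := by
      refine maxOn_eq_one (fun F hF => ?_) (Finset.mem_filter.mpr ⟨hT, hsT⟩)
        ((minOn_eq_one_iff (hB T hT)).mpr (subset_refl T))
      have hFn := hB F (Finset.mem_filter.mp hF).1
      obtain ⟨t, ht⟩ := hFn
      calc finsetMinOn F a ≤ a t := minOn_le_of_mem ht
        _ ≤ 1 := by by_cases h : t ∈ T <;> simp [ha, h]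
    have hL : finsetMaxOn (𝒜.filter (fun E => s ∈ E)) (fun E => finsetMinOn E a) = 1 := by
      rw [hVab a s]; exact hR
    have hAn : (𝒜.filter (fun E => s ∈ E)).Nonempty := (hmem 𝒜 s).mp hsA
    obtain ⟨E, hE, hEeq⟩ := maxOn_attained (v := fun E => finsetMinOn E a) hAn
    rw [hL] at hEeq
    obtain ⟨hE𝒜, hsE⟩ := Finset.mem_filter.mp hE
    exact ⟨E, hE𝒜, hsE, (minOn_eq_one_iff (hA E hE𝒜)).mp hEeq.symm⟩
  refine ⟨Finset.ext hcov, fun s hs => ?_⟩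
  have hs' := (hcov s).mp hs
  obtain ⟨hφV, hsφ, hφmin⟩ := hφ s hs
  obtain ⟨hφV', hsφ', hφmin'⟩ := hφ' s hs'
  apply Finset.Subset.antisymm
  · obtain ⟨E, hE, hsE, hET⟩ := key 𝒱 𝒱' hne hne' hV s hs hs' (φ' s) hφV' hsφ'
    exact (hφmin E hE hsE).trans hET
  · obtain ⟨E, hE, hsE, hET⟩ := key 𝒱' 𝒱 hne' hne (fun a s => (hV a s).symm) s hs' hs (φ s) hφV hsφ
    exact (hφmin' E hE hsE).trans hET
end
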